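/- Lemma 3.2, inequality (3.2): let θ₀ ∈ ℝ^Λ, α_{0,λ} = ∫_E f_{θ₀} ψ_λ dμ, b = exp(‖log f_{θ₀}‖_∞), e = exp(1), and let α ∈ ℝ^Λ with ‖α − α₀‖₂ ≤ 1/(2·e·b·A). Then there exists θ(α) ∈ ℝ^Λ with ∫_E f_{θ(α)} ψ_λ dμ = α_λ for all λ ∈ Λ and ‖log(f_{θ₀}/f_{θ(α)})‖_∞ ≤ 2·e·b·A·‖α − α₀‖₂. -/

import Mathlib

open MeasureTheory


lemma exp_mvt_lower_aux {a a' m : ℝ} (h' : m ≤ Real.exp a') (hle : a' ≤ a) :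
    m * (a - a') ^ 2 ≤ (Real.exp a - Real.exp a') * (a - a') := by
  have hid : Real.exp a' * Real.exp (a - a') = Real.exp a := by
    rw [← Real.exp_add]; ring_nf
  have h1 : Real.exp a' * (a - a') ≤ Real.exp a - Real.exp a' := by
    nlinarith [mul_le_mul_of_nonneg_left (Real.add_one_le_exp (a - a')) (Real.exp_pos a').le]
  nlinarith [mul_le_mul_of_nonneg_right h1 (sub_nonneg.2 hle),
    mul_le_mul_of_nonneg_right h' (sq_nonneg (a - a'))]

lemma exp_mvt_lower {a a' m : ℝ} (h : m ≤ Real.exp a) (h' : m ≤ Real.exp a') :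
    m * (a - a') ^ 2 ≤ (Real.exp a - Real.exp a') * (a - a') := by
  rcases le_total a' a with hle | hle
  · exact exp_mvt_lower_aux h' hle
  · have := exp_mvt_lower_aux h hle
    nlinarith [this]

lemma exp_mvt_upper_aux {a a' M : ℝ} (h : Real.exp a ≤ M) (hle : a' ≤ a) :
    Real.exp a - Real.exp a' ≤ M * (a - a') := by
  have hid : Real.exp a * Real.exp (a' - a) = Real.exp a' := by
    rw [← Real.exp_add]; ring_nf
  nlinarith [mul_le_mul_of_nonneg_left (Real.add_one_le_exp (a' - a)) (Real.exp_pos a).le,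
    sub_nonneg.2 hle]

lemma exp_mvt_upper {a a' M : ℝ} (h : Real.exp a ≤ M) (h' : Real.exp a' ≤ M)
    (hM : 0 ≤ M) : |Real.exp a - Real.exp a'| ≤ M * |a - a'| := by
  rcases le_total a' a with hle | hle
  · rw [abs_of_nonneg (by nlinarith [Real.exp_le_exp.2 hle] : (0:ℝ) ≤ Real.exp a - Real.exp a'),
      abs_of_nonneg (sub_nonneg.2 hle)]
    exact exp_mvt_upper_aux h hle
  · rw [abs_of_nonpos (by nlinarith [Real.exp_le_exp.2 hle] : Real.exp a - Real.exp a' ≤ 0),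
      abs_of_nonpos (sub_nonpos.2 hle)]
    have := exp_mvt_upper_aux h' hle
    nlinarith


section
variable {E : Type*} [MeasurableSpace E] {μ : Measure E} [IsFiniteMeasure μ]
  {Λ : Type*} [Fintype Λ] [DecidableEq Λ] {ψ : Λ → E → ℝ}

lemma integrable_of_bdd {f : E → ℝ} (hf : Measurable f) {C : ℝ} (hC : ∀ x, |f x| ≤ C) :
    Integrable f μ :=
  ⟨hf.aestronglyMeasurable, HasFiniteIntegral.of_bounded (ae_of_all μ hC)⟩

lemma uF_meas (hmeas : ∀ l, Measurable (ψ l)) (c : Λ → ℝ) :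
    Measurable (fun x => ∑ l, c l * ψ l x) :=
  Finset.measurable_sum _ (fun l _ => (hmeas l).const_mul _)

lemma uF_bdd (hbdd : ∀ l, ∃ C : ℝ, ∀ x, |ψ l x| ≤ C) (c : Λ → ℝ) :
    ∃ C : ℝ, ∀ x, |∑ l, c l * ψ l x| ≤ C := by
  refine ⟨∑ l, |c l| * (hbdd l).choose, fun x => ?_⟩
  refine (Finset.abs_sum_le_sum_abs _ _).trans (Finset.sum_le_sum fun l _ => ?_)
  rw [abs_mul]
  exact mul_le_mul_of_nonneg_left ((hbdd l).choose_spec x) (abs_nonneg _)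

lemma integrable_mul_bdd {f g : E → ℝ} (hf : Measurable f) (hg : Measurable g)
    {C D : ℝ} (hC : ∀ x, |f x| ≤ C) (hD : ∀ x, |g x| ≤ D) :
    Integrable (fun x => f x * g x) μ := by
  refine integrable_of_bdd (hf.mul hg) (C := C * D) (fun x => ?_)
  rw [abs_mul]
  exact mul_le_mul (hC x) (hD x) (abs_nonneg _) ((abs_nonneg _).trans (hC x))

/-- `∫ (∑ c ψ)² = ∑ c²` for an orthonormal family. -/
lemma uF_sq_integral (hmeas : ∀ l, Measurable (ψ l)) (hbdd : ∀ l, ∃ C : ℝ, ∀ x, |ψ l x| ≤ C)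
    (horth : ∀ l k, ∫ x, ψ l x * ψ k x ∂μ = if l = k then (1 : ℝ) else 0) (c : Λ → ℝ) :
    ∫ x, (∑ l, c l * ψ l x) ^ 2 ∂μ = ∑ l, c l ^ 2 := by
  have hint : ∀ l k : Λ, Integrable (fun x => c l * c k * (ψ l x * ψ k x)) μ := fun l k => by
    exact (integrable_mul_bdd (hmeas l) (hmeas k) (fun x => (hbdd l).choose_spec x)
      (fun x => (hbdd k).choose_spec x)).const_mul _
  have hpt : ∀ x, (∑ l, c l * ψ l x) ^ 2 = ∑ l, ∑ k, c l * c k * (ψ l x * ψ k x) := by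
    intro x
    rw [sq, Finset.sum_mul_sum]
    exact Finset.sum_congr rfl fun l _ => Finset.sum_congr rfl fun k _ => by ring
  calc ∫ x, (∑ l, c l * ψ l x) ^ 2 ∂μ
      = ∫ x, ∑ l, ∑ k, c l * c k * (ψ l x * ψ k x) ∂μ := by
        exact integral_congr_ae (ae_of_all μ hpt)
    _ = ∑ l, ∑ k, ∫ x, c l * c k * (ψ l x * ψ k x) ∂μ := by
        rw [integral_finset_sum _ (fun l _ => integrable_finset_sum _ (fun k _ => hint l k))]
        exact Finset.sum_congr rfl fun l _ => integral_finset_sum _ (fun k _ => hint l k)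
    _ = ∑ l, c l ^ 2 := by
        refine Finset.sum_congr rfl fun l _ => ?_
        rw [Finset.sum_eq_single l]
        · rw [integral_const_mul, horth l l, if_pos rfl]; ring
        · intro k _ hk
          rw [integral_const_mul, horth l k, if_neg (Ne.symm hk), mul_zero]
        · intro h; exact absurd (Finset.mem_univ l) h

/-- Bessel's inequality for a bounded measurable function. -/
lemma bessel_ineq (hmeas : ∀ l, Measurable (ψ l)) (hbdd : ∀ l, ∃ C : ℝ, ∀ x, |ψ l x| ≤ C)
    (horth : ∀ l k, ∫ x, ψ l x * ψ k x ∂μ = if l = k then (1 : ℝ) else 0)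
    {g : E → ℝ} (hg : Measurable g) {C : ℝ} (hgb : ∀ x, |g x| ≤ C) :
    ∑ l, (∫ x, g x * ψ l x ∂μ) ^ 2 ≤ ∫ x, g x ^ 2 ∂μ := by
  set c : Λ → ℝ := fun l => ∫ x, g x * ψ l x ∂μ with hc
  have hgψ : ∀ l : Λ, Integrable (fun x => g x * ψ l x) μ := fun l =>
    integrable_mul_bdd hg (hmeas l) hgb (fun x => (hbdd l).choose_spec x)
  have hg2 : Integrable (fun x => g x ^ 2) μ := by
    simpa [sq] using integrable_mul_bdd hg hg hgb hgb
  have hcb := uF_bdd hbdd c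
  obtain ⟨D, hD⟩ := hcb
  have humeas := uF_meas hmeas c
  have hgu : Integrable (fun x => g x * (∑ l, c l * ψ l x)) μ :=
    integrable_mul_bdd hg humeas hgb hD
  have hu2 : Integrable (fun x => (∑ l, c l * ψ l x) ^ 2) μ := by
    simpa [sq] using integrable_mul_bdd humeas humeas hD hD
  have hexp : ∫ x, (g x - ∑ l, c l * ψ l x) ^ 2 ∂μ
      = ∫ x, g x ^ 2 ∂μ - 2 * ∫ x, g x * (∑ l, c l * ψ l x) ∂μ
        + ∫ x, (∑ l, c l * ψ l x) ^ 2 ∂μ := by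
    have e1 : ∀ x, (g x - ∑ l, c l * ψ l x) ^ 2
        = (g x ^ 2 - 2 * (g x * ∑ l, c l * ψ l x)) + (∑ l, c l * ψ l x) ^ 2 :=
      fun x => by ring
    have hsub : Integrable (fun x => g x ^ 2 - 2 * (g x * ∑ l, c l * ψ l x)) μ :=
      hg2.sub (hgu.const_mul 2)
    rw [integral_congr_ae (ae_of_all μ e1),
      integral_add hsub hu2,
      integral_sub hg2 (hgu.const_mul 2), integral_const_mul]
  have hcross : ∫ x, g x * (∑ l, c l * ψ l x) ∂μ = ∑ l, c l ^ 2 := by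
    have : ∀ x, g x * (∑ l, c l * ψ l x) = ∑ l, c l * (g x * ψ l x) := by
      intro x; rw [Finset.mul_sum]; exact Finset.sum_congr rfl fun l _ => by ring
    rw [integral_congr_ae (ae_of_all μ this),
      integral_finset_sum _ (fun l _ => (hgψ l).const_mul _)]
    refine Finset.sum_congr rfl fun l _ => ?_
    rw [integral_const_mul]
    have : ∫ x, g x * ψ l x ∂μ = c l := rfl
    rw [this, sq]
  have hpos : 0 ≤ ∫ x, (g x - ∑ l, c l * ψ l x) ^ 2 ∂μ :=
    integral_nonneg fun x => sq_nonneg _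
  rw [hexp, hcross, uF_sq_integral hmeas hbdd horth c] at hpos
  linarith

end

set_option maxHeartbeats 1000000

/-- Lemma 3.2, inequality (3.2): under `‖α − α₀‖₂ ≤ 1/(2·e·b·A)` there exists `θ(α)`
satisfying the moment equations and `‖log(f_{θ₀}/f_{θ(α)})‖_∞ ≤ 2·e·b·A·‖α − α₀`. -/
theorem information_projection_log_ratio_bound
    {E : Type*} [MeasurableSpace E] (μ : Measure E) [IsFiniteMeasure μ]
    {Λ : Type*} [Fintype Λ] [DecidableEq Λ] (ψ : Λ → E → ℝ)
    (hmeas : ∀ l, Measurable (ψ l))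
    (hbdd : ∀ l, ∃ C : ℝ, ∀ x, |ψ l x| ≤ C)
    (horth : ∀ l k, ∫ x, ψ l x * ψ k x ∂μ = if l = k then (1 : ℝ) else 0)
    (A : ℝ) (hApos : 0 < A)
    (hA : ∀ c : Λ → ℝ, ∀ x, |∑ l, c l * ψ l x| ≤
      A * Real.sqrt (∫ y, (∑ l, c l * ψ l y) ^ 2 ∂μ))
    (θ₀ : Λ → ℝ) (α : Λ → ℝ)
    (hclose : Real.sqrt (∑ l,
        (α l - ∫ x, Real.exp (∑ l', θ₀ l' * ψ l' x) * ψ l x ∂μ) ^ 2) ≤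
      1 / (2 * Real.exp 1 * Real.exp (⨆ x, |∑ l, θ₀ l * ψ l x|) * A)) :
    ∃ θα : Λ → ℝ, (∀ l, ∫ x, Real.exp (∑ l', θα l' * ψ l' x) * ψ l x ∂μ = α l) ∧
      ∀ x, |Real.log (Real.exp (∑ l, θ₀ l * ψ l x) / Real.exp (∑ l, θα l * ψ l x))| ≤
        2 * Real.exp 1 * Real.exp (⨆ x, |∑ l, θ₀ l * ψ l x|) * A *
          Real.sqrt (∑ l,
            (α l - ∫ x, Real.exp (∑ l', θ₀ l' * ψ l' x) * ψ l x ∂μ) ^ 2) := by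
  classical
  set δ := Real.sqrt (∑ l,
      (α l - ∫ x, Real.exp (∑ l', θ₀ l' * ψ l' x) * ψ l x ∂μ) ^ 2) with hδdef
  set L := ⨆ x, |∑ l, θ₀ l * ψ l x| with hLdef
  obtain ⟨CL, hCL⟩ := uF_bdd hbdd θ₀
  have hL : ∀ x, |∑ l, θ₀ l * ψ l x| ≤ L :=
    fun x => le_ciSup ⟨CL, by rintro _ ⟨x, rfl⟩; exact hCL x⟩ x
  have hL0 : 0 ≤ L := by
    rcases isEmpty_or_nonempty E with hE | hE
    · rw [hLdef, Real.iSup_of_isEmpty]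
    · exact (abs_nonneg _).trans (hL (Classical.arbitrary E))
  set M := Real.exp (L + 1) with hMdef
  set m := Real.exp (-(L + 1)) with hmdef
  set q := Real.exp (-(4 * (L + 1))) with hqdef
  set cc := Real.exp (-(3 * (L + 1))) with hccdef
  set k := Real.sqrt (1 - q) with hkdef
  set r := 2 * Real.exp 1 * Real.exp L * δ with hrdef
  have hq0 : 0 < q := Real.exp_pos _
  have hq1 : q < 1 := by
    rw [hqdef]
    exact Real.exp_lt_one_iff.2 (by linarith)
  have hk0 : 0 ≤ k := Real.sqrt_nonneg _
  have hksq : k ^ 2 = 1 - q := Real.sq_sqrt (by linarith)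
  have hk1 : k < 1 := by nlinarith
  have hkq : k ≤ 1 - q / 2 := by
    have h := Real.sqrt_le_sqrt (show 1 - q ≤ (1 - q / 2) ^ 2 by nlinarith)
    rwa [Real.sqrt_sq (by linarith)] at h
  have hδ0 : 0 ≤ δ := Real.sqrt_nonneg _
  have hr0 : 0 ≤ r := by positivity
  have hAr : A * r ≤ 1 := by
    have hD : 0 < 2 * Real.exp 1 * Real.exp L * A := by positivity
    have h2 := (le_div_iff₀ hD).1 hclose
    nlinarith
  have hm0 : 0 < m := Real.exp_pos _
  have hM0 : 0 < M := Real.exp_pos _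
  have hcc0 : 0 < cc := Real.exp_pos _
  have hccm : cc * m = q := by rw [hccdef, hmdef, hqdef, ← Real.exp_add]; ring_nf
  have hccM : cc * M ^ 2 = m := by
    rw [hccdef, hMdef, hmdef, sq, ← Real.exp_add, ← Real.exp_add]; ring_nf
  -- Euclidean space setup
  set F : EuclideanSpace ℝ Λ → EuclideanSpace ℝ Λ :=
    fun θ => WithLp.toLp 2 (fun l => ∫ x, Real.exp (∑ l', θ l' * ψ l' x) * ψ l x ∂μ) with hFdef
  have hθ₀P : ∃ v : EuclideanSpace ℝ Λ, v = WithLp.toLp 2 θ₀ := ⟨_, rfl⟩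
  obtain ⟨θ₀P, hθ₀Peq⟩ := hθ₀P
  obtain ⟨αP, hαPeq⟩ : ∃ v : EuclideanSpace ℝ Λ, v = WithLp.toLp 2 α := ⟨_, rfl⟩
  have happ : ∀ (v : EuclideanSpace ℝ Λ) (f : Λ → ℝ), v = WithLp.toLp 2 f → ∀ l, v l = f l := by
    rintro v f rfl l; rfl
  have hnorm : ∀ v : EuclideanSpace ℝ Λ, ‖v‖ = Real.sqrt (∑ l, (v l) ^ 2) := by
    intro v
    rw [EuclideanSpace.norm_eq]
    congr 1
    exact Finset.sum_congr rfl fun l _ => by rw [Real.norm_eq_abs, sq_abs]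
  have hinner : ∀ v w : EuclideanSpace ℝ Λ, (inner ℝ v w : ℝ) = ∑ l, v l * w l := by
    intro v w
    simp [PiLp.inner_apply, RCLike.inner_apply, conj_trivial]
    exact Finset.sum_congr rfl fun l _ => mul_comm _ _
  have hAnorm : ∀ (v : EuclideanSpace ℝ Λ) (x : E),
      |∑ l, v l * ψ l x| ≤ A * ‖v‖ := by
    intro v x
    have h := hA (fun l => v l) x
    rwa [uF_sq_integral hmeas hbdd horth, ← hnorm] at h
  have hsub : ∀ (v w : EuclideanSpace ℝ Λ) (x : E),
      (∑ l, v l * ψ l x) - (∑ l, w l * ψ l x) = ∑ l, (v - w) l * ψ l x := by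
    intro v w x
    rw [← Finset.sum_sub_distrib]
    exact Finset.sum_congr rfl fun l _ => by show _ = (v l - w l) * _; ring
  -- pointwise exponential bounds on the ball
  have hexpb : ∀ θ : EuclideanSpace ℝ Λ, ‖θ - θ₀P‖ ≤ r → ∀ x,
      m ≤ Real.exp (∑ l, θ l * ψ l x) ∧ Real.exp (∑ l, θ l * ψ l x) ≤ M := by
    intro θ hθ x
    have h1 : |(∑ l, θ l * ψ l x) - (∑ l, θ₀ l * ψ l x)| ≤ 1 := by
      rw [show (∑ l, θ₀ l * ψ l x) = ∑ l, θ₀P l * ψ l x from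
        (Finset.sum_congr rfl fun l _ => by rw [happ θ₀P θ₀ hθ₀Peq]), hsub]
      calc |∑ l, (θ - θ₀P) l * ψ l x| ≤ A * ‖θ - θ₀P‖ := hAnorm _ x
        _ ≤ A * r := mul_le_mul_of_nonneg_left hθ hApos.le
        _ ≤ 1 := hAr
    have h2 : |∑ l, θ l * ψ l x| ≤ L + 1 := by
      have h3 := hL x
      have h4 := abs_sub_abs_le_abs_sub (∑ l, θ l * ψ l x) (∑ l, θ₀ l * ψ l x)
      linarith
    obtain ⟨h5, h6⟩ := abs_le.1 h2
    constructor
    · rw [hmdef]; exact Real.exp_le_exp.2 (by linarith)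
    · rw [hMdef]; exact Real.exp_le_exp.2 (by linarith)
  -- integrability facts
  have hexpmeas : ∀ θ : EuclideanSpace ℝ Λ,
      Measurable (fun x => Real.exp (∑ l, θ l * ψ l x)) :=
    fun θ => (uF_meas hmeas (fun l => θ l)).exp
  have hexpbdd : ∀ θ : EuclideanSpace ℝ Λ, ∃ C, ∀ x,
      |Real.exp (∑ l, θ l * ψ l x)| ≤ C := by
    intro θ
    obtain ⟨C, hC⟩ := uF_bdd hbdd (fun l => θ l)
    exact ⟨Real.exp C, fun x => by
      rw [abs_of_pos (Real.exp_pos _)]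
      exact Real.exp_le_exp.2 ((le_abs_self _).trans (hC x))⟩
  have hFint : ∀ (θ : EuclideanSpace ℝ Λ) (l : Λ),
      Integrable (fun x => Real.exp (∑ l', θ l' * ψ l' x) * ψ l x) μ := by
    intro θ l
    obtain ⟨C, hC⟩ := hexpbdd θ
    exact integrable_mul_bdd (hexpmeas θ) (hmeas l) hC (fun x => (hbdd l).choose_spec x)
  -- THE KEY CONTRACTION ESTIMATE
  have key : ∀ θ θ' : EuclideanSpace ℝ Λ, ‖θ - θ₀P‖ ≤ r → ‖θ' - θ₀P‖ ≤ r →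
      ‖(θ - θ') - cc • (F θ - F θ')‖ ≤ k * ‖θ - θ'‖ := by
    intro θ θ' hθ hθ'
    obtain ⟨Cg, hCg⟩ := hexpbdd θ
    obtain ⟨Cg', hCg'⟩ := hexpbdd θ'
    have hgmeas := hexpmeas θ
    have hg'meas := hexpmeas θ'
    have hgdmeas : Measurable (fun x =>
        Real.exp (∑ l', θ l' * ψ l' x) - Real.exp (∑ l', θ' l' * ψ l' x)) :=
      hgmeas.sub hg'meas
    have hgdbdd : ∀ x, |Real.exp (∑ l', θ l' * ψ l' x)
        - Real.exp (∑ l', θ' l' * ψ l' x)| ≤ Cg + Cg' := fun x =>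
      (abs_sub _ _).trans (add_le_add (hCg x) (hCg' x))
    have hum : Measurable (fun x => ∑ l, (θ - θ') l * ψ l x) :=
      uF_meas hmeas (fun l => (θ - θ') l)
    obtain ⟨Cu, hCu⟩ := uF_bdd hbdd (fun l => (θ - θ') l)
    have hptu : ∀ x : E, (∑ l, θ l * ψ l x) - (∑ l, θ' l * ψ l x)
        = ∑ l, (θ - θ') l * ψ l x := fun x => hsub θ θ' x
    have hbθ := hexpb θ hθ
    have hbθ' := hexpb θ' hθ'
    have hgdint : ∀ l, Integrable (fun x =>
        (Real.exp (∑ l', θ l' * ψ l' x) - Real.exp (∑ l', θ' l' * ψ l' x)) * ψ l x) μ :=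
      fun l => integrable_mul_bdd hgdmeas (hmeas l) hgdbdd (fun x => (hbdd l).choose_spec x)
    have hcomp : ∀ l, (F θ - F θ') l = ∫ x,
        (Real.exp (∑ l', θ l' * ψ l' x) - Real.exp (∑ l', θ' l' * ψ l' x)) * ψ l x ∂μ := by
      intro l
      have e1 : (F θ - F θ') l = F θ l - F θ' l := rfl
      rw [e1]
      simp only [hFdef]
      rw [← integral_sub (hFint θ l) (hFint θ' l)]
      exact integral_congr_ae (ae_of_all μ fun x => by ring)
    have hinner1 : (inner ℝ (θ - θ') (F θ - F θ') : ℝ) = ∫ x,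
        (Real.exp (∑ l', θ l' * ψ l' x) - Real.exp (∑ l', θ' l' * ψ l' x))
          * (∑ l, (θ - θ') l * ψ l x) ∂μ := by
      rw [hinner]
      calc ∑ l, (θ - θ') l * (F θ - F θ') l
          = ∑ l, ∫ x, (θ - θ') l * ((Real.exp (∑ l', θ l' * ψ l' x)
              - Real.exp (∑ l', θ' l' * ψ l' x)) * ψ l x) ∂μ := by
            refine Finset.sum_congr rfl fun l _ => ?_
            rw [hcomp l, ← integral_const_mul]
        _ = ∫ x, ∑ l, (θ - θ') l * ((Real.exp (∑ l', θ l' * ψ l' x)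
              - Real.exp (∑ l', θ' l' * ψ l' x)) * ψ l x) ∂μ :=
            (integral_finset_sum _ (fun l _ => (hgdint l).const_mul _)).symm
        _ = _ := by
            refine integral_congr_ae (ae_of_all μ fun x => ?_)
            simp only [Finset.mul_sum]
            exact Finset.sum_congr rfl fun l _ => by ring
    have husq : Integrable (fun x => (∑ l, (θ - θ') l * ψ l x) ^ 2) μ := by
      have := integrable_mul_bdd hum hum hCu hCu (μ := μ)
      simpa [sq] using this
    have hlow : m * ∑ l, ((θ - θ') l) ^ 2 ≤ (inner ℝ (θ - θ') (F θ - F θ') : ℝ) := by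
      rw [hinner1]
      have hint2 : Integrable (fun x =>
          (Real.exp (∑ l', θ l' * ψ l' x) - Real.exp (∑ l', θ' l' * ψ l' x))
            * (∑ l, (θ - θ') l * ψ l x)) μ :=
        integrable_mul_bdd hgdmeas hum hgdbdd hCu
      have hpt : ∀ x, m * (∑ l, (θ - θ') l * ψ l x) ^ 2 ≤
          (Real.exp (∑ l', θ l' * ψ l' x) - Real.exp (∑ l', θ' l' * ψ l' x))
            * (∑ l, (θ - θ') l * ψ l x) := by
        intro x
        have h1 := exp_mvt_lower (hbθ x).1 (hbθ' x).1
        rwa [hptu x] at h1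
      calc m * ∑ l, ((θ - θ') l) ^ 2
          = ∫ x, m * (∑ l, (θ - θ') l * ψ l x) ^ 2 ∂μ := by
            rw [integral_const_mul, uF_sq_integral hmeas hbdd horth]
        _ ≤ _ := integral_mono (husq.const_mul m) hint2 hpt
    have hup : ‖F θ - F θ'‖ ^ 2 ≤ M ^ 2 * ∑ l, ((θ - θ') l) ^ 2 := by
      have hn : ‖F θ - F θ'‖ ^ 2 = ∑ l, ((F θ - F θ') l) ^ 2 := by
        rw [hnorm]
        exact Real.sq_sqrt (Finset.sum_nonneg fun l _ => sq_nonneg _)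
      have h1 : ∑ l, ((F θ - F θ') l) ^ 2
          = ∑ l, (∫ x, (Real.exp (∑ l', θ l' * ψ l' x)
              - Real.exp (∑ l', θ' l' * ψ l' x)) * ψ l x ∂μ) ^ 2 :=
        Finset.sum_congr rfl fun l _ => by rw [hcomp l]
      have h2 := bessel_ineq hmeas hbdd horth hgdmeas hgdbdd
      have hgd2 : Integrable (fun x => (Real.exp (∑ l', θ l' * ψ l' x)
          - Real.exp (∑ l', θ' l' * ψ l' x)) ^ 2) μ := by
        have := integrable_mul_bdd hgdmeas hgdmeas hgdbdd hgdbdd (μ := μ)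
        simpa [sq] using this
      have h3 : ∫ x, (Real.exp (∑ l', θ l' * ψ l' x)
          - Real.exp (∑ l', θ' l' * ψ l' x)) ^ 2 ∂μ
          ≤ ∫ x, M ^ 2 * (∑ l, (θ - θ') l * ψ l x) ^ 2 ∂μ := by
        refine integral_mono hgd2 (husq.const_mul _) fun x => ?_
        have h4 := exp_mvt_upper (hbθ x).2 (hbθ' x).2 hM0.le
        rw [hptu x] at h4
        have h5 := mul_self_le_mul_self (abs_nonneg _) h4
        rw [abs_mul_abs_self] at h5
        have h6 : (M * |∑ l, (θ - θ') l * ψ l x|) * (M * |∑ l, (θ - θ') l * ψ l x|)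
            = M ^ 2 * (∑ l, (θ - θ') l * ψ l x) ^ 2 := by
          linear_combination (M ^ 2 : ℝ) * abs_mul_abs_self (∑ l, (θ - θ') l * ψ l x)
        rw [h6] at h5
        calc (Real.exp (∑ l', θ l' * ψ l' x) - Real.exp (∑ l', θ' l' * ψ l' x)) ^ 2
            = (Real.exp (∑ l', θ l' * ψ l' x) - Real.exp (∑ l', θ' l' * ψ l' x))
              * (Real.exp (∑ l', θ l' * ψ l' x) - Real.exp (∑ l', θ' l' * ψ l' x)) := sq
              (Real.exp (∑ l', θ l' * ψ l' x) - Real.exp (∑ l', θ' l' * ψ l' x))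
          _ ≤ _ := h5
      have h4 : ∫ x, M ^ 2 * (∑ l, (θ - θ') l * ψ l x) ^ 2 ∂μ
          = M ^ 2 * ∑ l, ((θ - θ') l) ^ 2 := by
        rw [integral_const_mul, uF_sq_integral hmeas hbdd horth]
      rw [hn, h1]
      linarith
    -- combine
    have hS0 : (0:ℝ) ≤ ∑ l, ((θ - θ') l) ^ 2 := Finset.sum_nonneg fun l _ => sq_nonneg _
    have hnh : ‖θ - θ'‖ ^ 2 = ∑ l, ((θ - θ') l) ^ 2 := by
      rw [hnorm]; exact Real.sq_sqrt hS0
    have hnormsq : ‖(θ - θ') - cc • (F θ - F θ')‖ ^ 2 ≤ (1 - q) * ‖θ - θ'‖ ^ 2 := by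
      have e1 := norm_sub_sq_real (θ - θ') (cc • (F θ - F θ'))
      rw [real_inner_smul_right, norm_smul, Real.norm_eq_abs, abs_of_pos hcc0, mul_pow] at e1
      have e2 : cc ^ 2 * (M ^ 2 * ∑ l, ((θ - θ') l) ^ 2) = q * ∑ l, ((θ - θ') l) ^ 2 := by
        linear_combination (cc * ∑ l, ((θ - θ') l) ^ 2) * hccM + (∑ l, ((θ - θ') l) ^ 2) * hccm
      have e3 : cc ^ 2 * ‖F θ - F θ'‖ ^ 2 ≤ q * ∑ l, ((θ - θ') l) ^ 2 := by
        rw [← e2]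
        exact mul_le_mul_of_nonneg_left hup (by positivity)
      have e4 : cc * (m * ∑ l, ((θ - θ') l) ^ 2) ≤ cc * (inner ℝ (θ - θ') (F θ - F θ') : ℝ) :=
        mul_le_mul_of_nonneg_left hlow hcc0.le
      have e5 : cc * (m * ∑ l, ((θ - θ') l) ^ 2) = q * ∑ l, ((θ - θ') l) ^ 2 := by
        linear_combination (∑ l, ((θ - θ') l) ^ 2) * hccm
      rw [hnh]
      nlinarith [e1, e3, e4, e5]
    have h1 : (k * ‖θ - θ'‖) ^ 2 = (1 - q) * ‖θ - θ'‖ ^ 2 := by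
      rw [mul_pow, hksq]
    have h2 := Real.sqrt_le_sqrt (hnormsq.trans_eq h1.symm)
    rwa [Real.sqrt_sq (norm_nonneg _), Real.sqrt_sq (mul_nonneg hk0 (norm_nonneg _))] at h2
  -- self-mapping of the ball
  have hδnorm : ‖αP - F θ₀P‖ = δ := by
    rw [hnorm, hδdef]
    congr 1
    refine Finset.sum_congr rfl fun l _ => ?_
    have h1 : (αP - F θ₀P) l = αP l - F θ₀P l := rfl
    rw [h1, happ αP α hαPeq]
    congr 2
    show (∫ x, Real.exp (∑ l', θ₀P l' * ψ l' x) * ψ l x ∂μ) = _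
    congr 1
    funext x
    rw [show (∑ l', θ₀P l' * ψ l' x) = ∑ l', θ₀ l' * ψ l' x from
      Finset.sum_congr rfl fun l' _ => by rw [happ θ₀P θ₀ hθ₀Peq]]
  have hself : ∀ θ : EuclideanSpace ℝ Λ, ‖θ - θ₀P‖ ≤ r →
      ‖(θ + cc • (αP - F θ)) - θ₀P‖ ≤ r := by
    intro θ hθ
    have hθ₀ball : ‖θ₀P - θ₀P‖ ≤ r := by rw [sub_self, norm_zero]; exact hr0
    have hid : (θ + cc • (αP - F θ)) - θ₀P
        = ((θ - θ₀P) - cc • (F θ - F θ₀P)) + cc • (αP - F θ₀P) := by module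
    have h1 := key θ θ₀P hθ hθ₀ball
    have hcd : cc * δ = q / 2 * r := by
      have h2 : q * (Real.exp 1 * Real.exp L) = cc := by
        rw [hqdef, hccdef, ← Real.exp_add, ← Real.exp_add]; ring_nf
      rw [hrdef, ← h2]; ring
    calc ‖(θ + cc • (αP - F θ)) - θ₀P‖
        ≤ ‖(θ - θ₀P) - cc • (F θ - F θ₀P)‖ + ‖cc • (αP - F θ₀P)‖ := by
          rw [hid]; exact norm_add_le _ _
      _ ≤ k * r + cc * δ := by
          have h3 : ‖cc • (αP - F θ₀P)‖ = cc * δ := by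
            rw [norm_smul, Real.norm_eq_abs, abs_of_pos hcc0, hδnorm]
          have h4 : k * ‖θ - θ₀P‖ ≤ k * r := mul_le_mul_of_nonneg_left hθ hk0
          linarith
      _ ≤ r := by rw [hcd]; nlinarith
  -- Banach fixed point
  set S := Metric.closedBall θ₀P r with hSdef
  have hScl : IsClosed S := Metric.isClosed_closedBall
  haveI : CompleteSpace S := hScl.completeSpace_coe
  haveI : Nonempty S := ⟨⟨θ₀P, Metric.mem_closedBall_self hr0⟩⟩
  have hmemS : ∀ v : EuclideanSpace ℝ Λ, v ∈ S ↔ ‖v - θ₀P‖ ≤ r := by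
    intro v
    rw [hSdef, Metric.mem_closedBall, dist_eq_norm]
  set G : S → S := fun p => ⟨p.1 + cc • (αP - F p.1),
    (hmemS _).2 (hself p.1 ((hmemS _).1 p.2))⟩ with hGdef
  have hcontr : ContractingWith ⟨k, hk0⟩ G := by
    constructor
    · show (⟨k, hk0⟩ : NNReal) < 1
      exact NNReal.coe_lt_coe.1 hk1
    · refine LipschitzWith.of_dist_le_mul fun p p' => ?_
      rw [Subtype.dist_eq, Subtype.dist_eq, dist_eq_norm, dist_eq_norm]
      have hid2 : (G p).1 - (G p').1
          = (p.1 - p'.1) - cc • (F p.1 - F p'.1) := by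
        show (p.1 + cc • (αP - F p.1)) - (p'.1 + cc • (αP - F p'.1)) = _
        module
      calc ‖(G p).1 - (G p').1‖ = ‖(p.1 - p'.1) - cc • (F p.1 - F p'.1)‖ := by rw [hid2]
        _ ≤ k * ‖p.1 - p'.1‖ := key p.1 p'.1 ((hmemS _).1 p.2) ((hmemS _).1 p'.2)
  set θsS := ContractingWith.fixedPoint G hcontr with hθsdef
  have hfix : G θsS = θsS := hcontr.fixedPoint_isFixedPt
  have hval : θsS.1 + cc • (αP - F θsS.1) = θsS.1 := congrArg Subtype.val hfix
  have hz : cc • (αP - F θsS.1) = 0 := by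
    have := hval
    rwa [add_eq_left] at this
  have hFα : F θsS.1 = αP := by
    have h1 := (smul_eq_zero.1 hz).resolve_left (ne_of_gt hcc0)
    rw [sub_eq_zero] at h1
    exact h1.symm
  have hballmem : ‖θsS.1 - θ₀P‖ ≤ r := (hmemS _).1 θsS.2
  refine ⟨(fun l => θsS.1 l), fun l => ?_, fun x => ?_⟩
  · have h1 := congrArg (fun v : EuclideanSpace ℝ Λ => v l) hFα
    simp only [hFdef] at h1
    rw [← happ αP α hαPeq l]
    exact h1
  · rw [← Real.exp_sub, Real.log_exp]
    have h1 : (∑ l, θ₀ l * ψ l x) - (∑ l, θsS.1 l * ψ l x)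
        = ∑ l, (θ₀P - θsS.1) l * ψ l x := by
      rw [← hsub θ₀P θsS.1 x]
      congr 1
      exact Finset.sum_congr rfl fun l _ => by rw [happ θ₀P θ₀ hθ₀Peq]
    rw [h1]
    calc |∑ l, (θ₀P - θsS.1) l * ψ l x| ≤ A * ‖θ₀P - θsS.1‖ := hAnorm _ x
      _ = A * ‖θsS.1 - θ₀P‖ := by rw [norm_sub_rev]
      _ ≤ A * r := mul_le_mul_of_nonneg_left hballmem hApos.le
      _ = 2 * Real.exp 1 * Real.exp L * A * δ := by rw [hrdef]; ring
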